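/- arXiv:2106.04313 — 4 statements merged into one kernel-verified Lean document; each statement's English description precedes it below -/
import Mathlib

section
/- For every real number $\xi\in(0,\sqrt{7})$ such that $1,\xi,\sqrt{7-\xi^2}$ are linearly independent over $\mathbb{Q}$, the plane $A_\xi\subset\mathbb{R}^4$ spanned by $X^{(1)}_\xi=(0,1,\xi,\sqrt{7-\xi^2})$ and $X^{(2)}_\xi=(1,0,-\sqrt{7-\xi^2},\xi)$ intersects every rational plane of $\mathbb{R}^4$ trivially (i.e. $A_\xi$ is $(2,1)$-irrational). -/
private lemma zmod7_aux : ∀ a b : ZMod 7, a ^ 2 + b ^ 2 = 0 → a = 0 ∧ b = 0 := by decide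

private lemma int_seven_aux : ∀ n : ℕ, ∀ x y z : ℤ, z.natAbs = n →
    x ^ 2 + y ^ 2 = 7 * z ^ 2 → x = 0 ∧ y = 0 ∧ z = 0 := by
  intro n
  induction n using Nat.strong_induction_on with
  | _ n ih =>
    intro x y z hn h
    rcases eq_or_ne z 0 with hz | hz
    · subst hz
      refine ⟨by nlinarith, by nlinarith, rfl⟩
    · exfalso
      have hmod : ((x : ZMod 7)) ^ 2 + ((y : ZMod 7)) ^ 2 = 0 := by
        have := congrArg (fun t : ℤ => (t : ZMod 7)) h
        push_cast at this
        rw [this]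
        have h7 : ((7 : ℤ) : ZMod 7) = 0 := by decide
        push_cast at h7 ⊢
        rw [h7]; ring
      obtain ⟨hx7, hy7⟩ := zmod7_aux _ _ hmod
      obtain ⟨a, rfl⟩ := (ZMod.intCast_zmod_eq_zero_iff_dvd x 7).mp hx7
      obtain ⟨b, rfl⟩ := (ZMod.intCast_zmod_eq_zero_iff_dvd y 7).mp hy7
      push_cast at h
      have h2 : 7 * (a ^ 2 + b ^ 2) = z ^ 2 := by nlinarith [h]
      have hp : Prime (7 : ℤ) := by norm_num
      have hdz : (7 : ℤ) ∣ z := hp.dvd_of_dvd_pow (n := 2) ⟨a ^ 2 + b ^ 2, h2.symm⟩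
      obtain ⟨c, rfl⟩ := hdz
      have hc : c ≠ 0 := by rintro rfl; simp at hz
      have hlt : c.natAbs < n := by
        rw [Int.natAbs_mul] at hn
        have h1 : 0 < c.natAbs := Int.natAbs_pos.mpr hc
        rw [show ((7:ℤ)).natAbs = 7 from rfl] at hn
        omega
      have := ih _ hlt a b c rfl (by nlinarith)
      exact hc this.2.2

private lemma rat_seven_aux (x y z : ℚ) (h : x ^ 2 + y ^ 2 = 7 * z ^ 2) :
    x = 0 ∧ y = 0 ∧ z = 0 := by
  have hxd : ((x.num : ℚ)) = x * (x.den : ℚ) := by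
    have hd : ((x.den : ℚ)) ≠ 0 := by exact_mod_cast x.den_nz
    rw [← div_eq_iff hd]; exact Rat.num_div_den _
  have hyd : ((y.num : ℚ)) = y * (y.den : ℚ) := by
    have hd : ((y.den : ℚ)) ≠ 0 := by exact_mod_cast y.den_nz
    rw [← div_eq_iff hd]; exact Rat.num_div_den _
  have hzd : ((z.num : ℚ)) = z * (z.den : ℚ) := by
    have hd : ((z.den : ℚ)) ≠ 0 := by exact_mod_cast z.den_nz
    rw [← div_eq_iff hd]; exact Rat.num_div_den _
  set X : ℤ := x.num * (y.den : ℤ) * (z.den : ℤ) with hX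
  set Y : ℤ := y.num * (x.den : ℤ) * (z.den : ℤ) with hY
  set Z : ℤ := z.num * (x.den : ℤ) * (y.den : ℤ) with hZ
  have hQ : (X : ℚ) ^ 2 + (Y : ℚ) ^ 2 = 7 * (Z : ℚ) ^ 2 := by
    push_cast [hX, hY, hZ]
    rw [hxd, hyd, hzd]
    linear_combination ((x.den : ℚ) * (y.den : ℚ) * (z.den : ℚ)) ^ 2 * h
  have hZint : X ^ 2 + Y ^ 2 = 7 * Z ^ 2 := by exact_mod_cast hQ
  obtain ⟨hX0, hY0, hZ0⟩ := int_seven_aux Z.natAbs X Y Z rfl hZint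
  have hxden : (x.den : ℤ) ≠ 0 := by exact_mod_cast x.den_nz
  have hyden : (y.den : ℤ) ≠ 0 := by exact_mod_cast y.den_nz
  have hzden : (z.den : ℤ) ≠ 0 := by exact_mod_cast z.den_nz
  refine ⟨?_, ?_, ?_⟩
  · have : x.num = 0 := by
      rcases mul_eq_zero.mp ((mul_eq_zero.mp hX0).resolve_right hzden) with h' | h'
      · exact h'
      · exact absurd h' hyden
    exact Rat.num_eq_zero.mp this
  · have : y.num = 0 := by
      rcases mul_eq_zero.mp ((mul_eq_zero.mp hY0).resolve_right hzden) with h' | h'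
      · exact h'
      · exact absurd h' hxden
    exact Rat.num_eq_zero.mp this
  · have : z.num = 0 := by
      rcases mul_eq_zero.mp ((mul_eq_zero.mp hZ0).resolve_right hyden) with h' | h'
      · exact h'
      · exact absurd h' hxden
    exact Rat.num_eq_zero.mp this

private lemma det_fin_four' {R : Type*} [CommRing R] (A : Matrix (Fin 4) (Fin 4) R) :
    A.det =
        A 0 0 * A 1 1 * A 2 2 * A 3 3 - A 0 0 * A 1 1 * A 2 3 * A 3 2
      - A 0 0 * A 1 2 * A 2 1 * A 3 3 + A 0 0 * A 1 2 * A 2 3 * A 3 1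
      + A 0 0 * A 1 3 * A 2 1 * A 3 2 - A 0 0 * A 1 3 * A 2 2 * A 3 1
      - A 0 1 * A 1 0 * A 2 2 * A 3 3 + A 0 1 * A 1 0 * A 2 3 * A 3 2
      + A 0 1 * A 1 2 * A 2 0 * A 3 3 - A 0 1 * A 1 2 * A 2 3 * A 3 0
      - A 0 1 * A 1 3 * A 2 0 * A 3 2 + A 0 1 * A 1 3 * A 2 2 * A 3 0
      + A 0 2 * A 1 0 * A 2 1 * A 3 3 - A 0 2 * A 1 0 * A 2 3 * A 3 1
      - A 0 2 * A 1 1 * A 2 0 * A 3 3 + A 0 2 * A 1 1 * A 2 3 * A 3 0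
      + A 0 2 * A 1 3 * A 2 0 * A 3 1 - A 0 2 * A 1 3 * A 2 1 * A 3 0
      - A 0 3 * A 1 0 * A 2 1 * A 3 2 + A 0 3 * A 1 0 * A 2 2 * A 3 1
      + A 0 3 * A 1 1 * A 2 0 * A 3 2 - A 0 3 * A 1 1 * A 2 2 * A 3 0
      - A 0 3 * A 1 2 * A 2 0 * A 3 1 + A 0 3 * A 1 2 * A 2 1 * A 3 0 := by
  rw [show A = Matrix.of ![![A 0 0, A 0 1, A 0 2, A 0 3], ![A 1 0, A 1 1, A 1 2, A 1 3],
      ![A 2 0, A 2 1, A 2 2, A 2 3], ![A 3 0, A 3 1, A 3 2, A 3 3]] from by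
    ext i j; fin_cases i <;> fin_cases j <;> rfl]
  simp [Matrix.det_succ_row_zero, Fin.sum_univ_succ, Matrix.det_fin_three, Fin.succAbove]
  ring

/-- For `ξ ∈ (0, √7)` such that `1, ξ, √(7 - ξ²)` are linearly independent over `ℚ`,
the plane `A_ξ ⊂ ℝ⁴` spanned by `(0,1,ξ,√(7-ξ²))` and `(1,0,-√(7-ξ²),ξ)` intersects
every rational plane of `ℝ⁴` trivially, i.e. `A_ξ` is `(2,1)`-irrational. -/
theorem A_xi_is_two_one_irrational (ξ : ℝ) (h0 : 0 < ξ) (h7 : ξ < Real.sqrt 7)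
    (hindep : ∀ a b c : ℚ,
      (a : ℝ) + (b : ℝ) * ξ + (c : ℝ) * Real.sqrt (7 - ξ ^ 2) = 0 →
        a = 0 ∧ b = 0 ∧ c = 0)
    (B : Submodule ℝ (Fin 4 → ℝ))
    (hrat : ∃ W : Fin 2 → Fin 4 → ℚ,
      B = Submodule.span ℝ (Set.range fun j => fun i => (W j i : ℝ)))
    (hdim : Module.finrank ℝ B = 2) :
    Submodule.span ℝ
        {![(0:ℝ), 1, ξ, Real.sqrt (7 - ξ ^ 2)],
          ![(1:ℝ), 0, -Real.sqrt (7 - ξ ^ 2), ξ]} ⊓ B = ⊥ := by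
  obtain ⟨W, hB⟩ := hrat
  have hξ2 : ξ ^ 2 < 7 := by
    nlinarith [Real.sq_sqrt (show (0:ℝ) ≤ 7 by norm_num), Real.sqrt_nonneg 7]
  have hη2 : Real.sqrt (7 - ξ ^ 2) ^ 2 = 7 - ξ ^ 2 := Real.sq_sqrt (by linarith)
  set η := Real.sqrt (7 - ξ ^ 2) with hηdef
  set v1 : Fin 4 → ℝ := ![0, 1, ξ, η] with hv1
  set v2 : Fin 4 → ℝ := ![1, 0, -η, ξ] with hv2
  set wR : Fin 2 → Fin 4 → ℝ := fun j => fun i => (W j i : ℝ) with hwR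
  set q12 : ℚ := W 0 0 * W 1 1 - W 0 1 * W 1 0 with hq12
  set q13 : ℚ := W 0 0 * W 1 2 - W 0 2 * W 1 0 with hq13
  set q14 : ℚ := W 0 0 * W 1 3 - W 0 3 * W 1 0 with hq14
  set q23 : ℚ := W 0 1 * W 1 2 - W 0 2 * W 1 1 with hq23
  set q24 : ℚ := W 0 1 * W 1 3 - W 0 3 * W 1 1 with hq24
  set q34 : ℚ := W 0 2 * W 1 3 - W 0 3 * W 1 2 with hq34
  -- the rows of W are linearly independent over ℝ since finrank B = 2
  have hWind : LinearIndependent ℝ wR := by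
    rw [linearIndependent_iff_card_eq_finrank_span]
    rw [Set.finrank, ← hB, hdim]
    simp
  -- not all Plücker coordinates vanish
  have hqne : ¬(q12 = 0 ∧ q13 = 0 ∧ q14 = 0 ∧ q23 = 0 ∧ q24 = 0 ∧ q34 = 0) := by
    rintro ⟨e12, e13, e14, e23, e24, e34⟩
    rw [hq12] at e12; rw [hq13] at e13; rw [hq14] at e14
    rw [hq23] at e23; rw [hq24] at e24; rw [hq34] at e34
    have hall : ∀ a b : Fin 4, W 0 a * W 1 b = W 0 b * W 1 a := by
      intro a b
      fin_cases a <;> fin_cases b <;>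
        simp only [Fin.mk_zero, Fin.mk_one, show ((⟨2, by omega⟩ : Fin 4)) = 2 from rfl,
          show ((⟨3, by omega⟩ : Fin 4)) = 3 from rfl] <;>
        first
          | ring1
          | linarith [e12, e13, e14, e23, e24, e34]
    by_cases h00 : ∀ i, W 0 i = 0
    · have hz : wR 0 = 0 := by
        funext i; simp [hwR, h00 i]
      exact hWind.ne_zero 0 hz
    · push_neg at h00
      obtain ⟨k, hk⟩ := h00
      have hdepQ : ∀ i, (W 1 k) * (W 0 i) + (-(W 0 k)) * (W 1 i) = 0 := by
        intro i
        linear_combination -(hall k i)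
      have hdep : ∑ j, (![(W 1 k : ℝ), -(W 0 k : ℝ)] : Fin 2 → ℝ) j • wR j = 0 := by
        rw [Fin.sum_univ_two]
        funext i
        have h' := hdepQ i
        simp only [hwR, Matrix.cons_val_zero, Matrix.cons_val_one, Matrix.head_cons,
          Pi.add_apply, Pi.smul_apply, smul_eq_mul, Pi.zero_apply]
        exact_mod_cast congrArg (fun t : ℚ => (t : ℝ)) h'
      have hz := Fintype.linearIndependent_iff.mp hWind _ hdep 1
      simp only [Matrix.cons_val_one, Matrix.head_cons, neg_eq_zero] at hz
      exact hk (by simpa using hz)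
  -- the 4×4 matrix whose rows are v1, v2 and the rows of W
  set f : Fin 4 → Fin 4 → ℝ := ![v1, v2, wR 0, wR 1] with hf
  set A : Matrix (Fin 4) (Fin 4) ℝ := Matrix.of f with hA
  have hdetval : A.det = ((7 * q12 - q34 : ℚ) : ℝ) + ((q24 - q13 : ℚ) : ℝ) * ξ
      + ((-(q23 + q14) : ℚ) : ℝ) * η := by
    rw [hA, det_fin_four']
    simp only [hq12, hq13, hq14, hq23, hq24, hq34]
    push_cast
    simp only [hf, Matrix.of_apply, Matrix.cons_val_zero, Matrix.cons_val_one, Matrix.head_cons,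
      Matrix.cons_val_two, Matrix.cons_val_three, Matrix.tail_cons, Matrix.vecHead,
      Matrix.vecTail, Function.comp_apply, Fin.succ_zero_eq_one, Fin.succ_one_eq_two,
      hv1, hv2, hwR]
    linear_combination ((W 0 0 : ℝ) * (W 1 1 : ℝ) - (W 0 1 : ℝ) * (W 1 0 : ℝ)) * hη2
  have hdetne : A.det ≠ 0 := by
    rw [hdetval]
    intro hzero
    obtain ⟨ha, hb, hc⟩ := hindep _ _ _ hzero
    have ha' : q34 = 7 * q12 := by linarith
    have hb' : q24 = q13 := by linarith
    have hc' : q23 = -q14 := by linarith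
    have hpl : q12 * q34 - q13 * q24 + q14 * q23 = 0 := by
      rw [hq12, hq13, hq14, hq23, hq24, hq34]; ring
    rw [ha', hb', hc'] at hpl
    have h7eq : q13 ^ 2 + q14 ^ 2 = 7 * q12 ^ 2 := by linear_combination -hpl
    obtain ⟨h13, h14, h12⟩ := rat_seven_aux q13 q14 q12 h7eq
    exact hqne ⟨h12, h13, h14, by rw [hc', h14, neg_zero], by rw [hb', h13],
      by rw [ha', h12, mul_zero]⟩
  have hlinind : LinearIndependent ℝ (fun i => A i) :=
    Matrix.linearIndependent_rows_iff_isUnit.mpr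
      ((Matrix.isUnit_iff_isUnit_det A).mpr (isUnit_iff_ne_zero.mpr hdetne))
  have hlinf : LinearIndependent ℝ f := hlinind
  -- conclude
  rw [Submodule.eq_bot_iff]
  intro x hx
  rw [Submodule.mem_inf] at hx
  obtain ⟨hx1, hx2⟩ := hx
  obtain ⟨a, b, hab⟩ := Submodule.mem_span_pair.mp hx1
  rw [hB] at hx2
  obtain ⟨c, hc⟩ := (Submodule.mem_span_range_iff_exists_fun ℝ).mp hx2
  rw [Fin.sum_univ_two] at hc
  have hsum : ∑ i, (![a, b, -c 0, -c 1] : Fin 4 → ℝ) i • f i = 0 := by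
    rw [Fin.sum_univ_four]
    simp only [hf, Matrix.cons_val_zero, Matrix.cons_val_one, Matrix.head_cons,
      Matrix.cons_val_two, Matrix.cons_val_three, Matrix.tail_cons, Matrix.vecHead,
      Matrix.vecTail, Function.comp_apply, Fin.succ_zero_eq_one, Fin.succ_one_eq_two]
    linear_combination (norm := module) hab - hc
  have hcoef := Fintype.linearIndependent_iff.mp hlinf ![a, b, -c 0, -c 1] hsum
  have ha0 : a = 0 := by simpa using hcoef 0
  have hb0 : b = 0 := by simpa using hcoef 1
  rw [← hab, ha0, hb0]
  simp
end

section
/- Let $D$ and $E$ be subspaces of $\mathbb{R}^n$ both of dimension $k$. Then there exist lines $D_1,\ldots,D_k\subset D$ and $E_1,\ldots,E_k\subset E$ with $D=D_1\oplus\cdots\oplus D_k$ and $E=E_1\oplus\cdots\oplus E_k$ such that $\psi_k(D,E)\le \sum_{i=1}^k\psi_1(D_i,E_i)\le k\,\psi_k(D,E)$. -/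
/-- `θ` is the family of canonical angles between the `k`-dimensional subspaces
`D`, `E` of `ℝⁿ`: there are orthonormal bases `(X₁,…,X_k)` of `D` and
`(Y₁,…,Y_k)` of `E` with `Xᵢ · Yⱼ = δᵢⱼ cos θᵢ`, and `ψ_i(D,E) = sin θᵢ`
is nondecreasing in `i`. -/
def CanonicalAnglesSq (n k : ℕ) (D E : Submodule ℝ (EuclideanSpace ℝ (Fin n)))
    (θ : Fin k → ℝ) : Prop :=
  Module.finrank ℝ D = k ∧ Module.finrank ℝ E = k ∧
  Monotone θ ∧ (∀ i, θ i ∈ Set.Icc 0 (Real.pi / 2)) ∧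
  ∃ (X : Fin k → EuclideanSpace ℝ (Fin n)) (Y : Fin k → EuclideanSpace ℝ (Fin n)),
    Orthonormal ℝ X ∧ Orthonormal ℝ Y ∧
    Submodule.span ℝ (Set.range X) = D ∧ Submodule.span ℝ (Set.range Y) = E ∧
    ∀ i j : Fin k,
      (inner ℝ (X i) (Y j) : ℝ) = if i = j then Real.cos (θ i) else 0

/-- Let `D`, `E` be `k`-dimensional subspaces of `ℝⁿ`.  There are lines
`D₁,…,D_k` (spanned by `u₁,…,u_k`) with `D = D₁ ⊕ ⋯ ⊕ D_k` and lines
`E₁,…,E_k` (spanned by `v₁,…,v_k`) with `E = E₁ ⊕ ⋯ ⊕ E_k` such that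
`ψ_k(D,E) ≤ ∑ᵢ ψ₁(Dᵢ,Eᵢ) ≤ k ψ_k(D,E)`, where `ψ₁(Dᵢ,Eᵢ) = sin (uᵢ, vᵢ)̂`
and `ψ_k(D,E) = sin θ_k` is the sine of the largest canonical angle. -/
theorem exists_lines_decomposition (n k : ℕ) (hk : 1 ≤ k)
    (D E : Submodule ℝ (EuclideanSpace ℝ (Fin n)))
    (θ : Fin k → ℝ) (hθ : CanonicalAnglesSq n k D E θ) :
    ∃ (u v : Fin k → EuclideanSpace ℝ (Fin n)),
      (∀ i, u i ≠ 0) ∧ (∀ i, v i ≠ 0) ∧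
      LinearIndependent ℝ u ∧ LinearIndependent ℝ v ∧
      Submodule.span ℝ (Set.range u) = D ∧ Submodule.span ℝ (Set.range v) = E ∧
      Real.sin (θ ⟨k - 1, by omega⟩) ≤
        ∑ i, Real.sin (InnerProductGeometry.angle (u i) (v i)) ∧
      ∑ i, Real.sin (InnerProductGeometry.angle (u i) (v i)) ≤
        (k : ℝ) * Real.sin (θ ⟨k - 1, by omega⟩) := by

  obtain ⟨hD, hE, hmono, hrange, X, Y, hX, hY, hXD, hYE, hinner⟩ := hθ
  have hang : ∀ i, InnerProductGeometry.angle (X i) (Y i) = θ i := by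
    intro i
    rw [InnerProductGeometry.angle, hinner i i, if_pos rfl, hX.1 i, hY.1 i]
    simp [Real.arccos_cos (hrange i).1 (le_trans (hrange i).2 (by linarith [Real.pi_pos]))]
  set m : Fin k := ⟨k - 1, by omega⟩ with hm
  have hsinle : ∀ i, Real.sin (θ i) ≤ Real.sin (θ m) := by
    intro i
    apply Real.sin_le_sin_of_le_of_le_pi_div_two (by linarith [Real.pi_pos, (hrange i).1]) (hrange m).2
    exact hmono (show i ≤ m by rw [hm, Fin.le_def]; have := i.isLt; simp; omega)
  have hsinnn : ∀ i, 0 ≤ Real.sin (θ i) := fun i =>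
    Real.sin_nonneg_of_nonneg_of_le_pi (hrange i).1
      (le_trans (hrange i).2 (by linarith [Real.pi_pos]))
  refine ⟨X, Y, fun i => hX.ne_zero i, fun i => hY.ne_zero i,
    hX.linearIndependent, hY.linearIndependent, hXD, hYE, ?_, ?_⟩
  · calc Real.sin (θ m) = Real.sin (InnerProductGeometry.angle (X m) (Y m)) := by
          rw [hang]
      _ ≤ ∑ i, Real.sin (InnerProductGeometry.angle (X i) (Y i)) := by
          refine Finset.single_le_sum (f := fun i => Real.sin (InnerProductGeometry.angle (X i) (Y i))) (fun i _ => ?_) (Finset.mem_univ m)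
          simp only [hang]; exact hsinnn i
  · calc ∑ i, Real.sin (InnerProductGeometry.angle (X i) (Y i))
        ≤ ∑ _i : Fin k, Real.sin (θ m) := by
          apply Finset.sum_le_sum; intro i _; rw [hang]; exact hsinle i
      _ = (k : ℝ) * Real.sin (θ m) := by simp [Finset.sum_const, mul_comm]
end

section
/- Let $n\ge 4$ and let $F_1,\ldots,F_\ell,B_1,\ldots,B_\ell$ be subspaces of $\mathbb{R}^n$ with $\dim F_i=\dim B_i=d_i$ for each $i$, such that the $F_i$ span a subspace of dimension $k=d_1+\cdots+d_\ell$ and likewise the $B_i$. Set $F=F_1\oplus\cdots\oplus F_\ell$ and $B=B_1\oplus\cdots\oplus B_\ell$. Then there is a constant $c>0$ depending only on $F_1,\ldots,F_\ell$ and $n$ such that $\psi_k(F,B)\le c\sum_{i=1}^\ell \psi_{d_i}(F_i,B_i)$. -/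
-- Lemma A: approximation
lemma approx_lemma {n k : ℕ} (hk : 0 < k) {D E : Submodule ℝ (EuclideanSpace ℝ (Fin n))}
    {θ : Fin k → ℝ} (h : CanonicalAnglesSq n k D E θ) (x : EuclideanSpace ℝ (Fin n))
    (hx : x ∈ D) :
    ∃ y ∈ E, ‖x - y‖ ≤ Real.sqrt 2 * Real.sin (θ ⟨k - 1, by omega⟩) * ‖x‖ := by
  obtain ⟨-, -, hmono, hicc, X, Y, hX, hY, hXD, hYE, hXY⟩ := h
  rw [← hXD] at hx
  obtain ⟨a, ha⟩ := Submodule.mem_span_range_iff_exists_fun ℝ |>.mp hx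
  set m : Fin k := ⟨k - 1, by omega⟩
  refine ⟨∑ j, a j • Y j, ?_, ?_⟩
  · rw [← hYE]; exact Submodule.sum_mem _ fun j _ => Submodule.smul_mem _ _
      (Submodule.subset_span (Set.mem_range_self j))
  have hnx : ‖x‖ ^ 2 = ∑ j, a j ^ 2 := by
    rw [← ha, ← real_inner_self_eq_norm_sq, hX.inner_sum]
    simp [pow_two]
  have hny : ‖(∑ j, a j • Y j : EuclideanSpace ℝ (Fin n))‖ ^ 2 = ∑ j, a j ^ 2 := by
    rw [← real_inner_self_eq_norm_sq, hY.inner_sum]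
    simp [pow_two]
  have hxy : (inner ℝ x (∑ j, a j • Y j) : ℝ) = ∑ j, a j ^ 2 * Real.cos (θ j) := by
    rw [← ha, sum_inner]
    congr 1; ext j
    rw [inner_sum]
    rw [Finset.sum_eq_single j]
    · rw [real_inner_smul_left, real_inner_smul_right, hXY]
      simp [pow_two]; ring
    · intro b _ hb
      rw [real_inner_smul_left, real_inner_smul_right, hXY]
      simp [hb.symm]  -- if j = b then ... else 0, j ≠ b
    · simp
  have key : ‖x - ∑ j, a j • Y j‖ ^ 2 ≤ (Real.sqrt 2 * Real.sin (θ m) * ‖x‖) ^ 2 := by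
    have hexp : ‖x - ∑ j, a j • Y j‖ ^ 2 = ∑ j, a j ^ 2 * (2 - 2 * Real.cos (θ j)) := by
      rw [norm_sub_sq_real, hnx, hny, hxy, Finset.mul_sum, ← Finset.sum_sub_distrib,
        ← Finset.sum_add_distrib]
      congr 1; ext j; ring
    rw [hexp]
    have h2 : ∀ j : Fin k, 2 - 2 * Real.cos (θ j) ≤ 2 * Real.sin (θ m) ^ 2 := by
      intro j
      have hjm : θ j ≤ θ m := by
        apply hmono
        have : (j : ℕ) ≤ k - 1 := by omega
        exact this
      have h1 : Real.cos (θ m) ≤ Real.cos (θ j) :=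
        Real.cos_le_cos_of_nonneg_of_le_pi (hicc j).1
          (le_trans (hicc m).2 (by linarith [Real.pi_pos])) hjm
      have hsin : Real.sin (θ m) ^ 2 = 1 - Real.cos (θ m) ^ 2 := by
        rw [Real.sin_sq]
      have hcos0 : 0 ≤ Real.cos (θ m) :=
        Real.cos_nonneg_of_mem_Icc ⟨by linarith [(hicc m).1, Real.pi_pos], (hicc m).2⟩
      nlinarith [Real.cos_le_one (θ m)]
    calc ∑ j, a j ^ 2 * (2 - 2 * Real.cos (θ j))
        ≤ ∑ j, a j ^ 2 * (2 * Real.sin (θ m) ^ 2) := by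
          apply Finset.sum_le_sum
          intro j _
          exact mul_le_mul_of_nonneg_left (h2 j) (sq_nonneg _)
      _ = (Real.sqrt 2 * Real.sin (θ m) * ‖x‖) ^ 2 := by
          rw [← Finset.sum_mul, ← hnx]
          rw [mul_pow, mul_pow, Real.sq_sqrt (by norm_num)]
          ring
  have h1 : 0 ≤ Real.sqrt 2 * Real.sin (θ m) * ‖x‖ := by
    have := Real.sin_nonneg_of_nonneg_of_le_pi (hicc m).1
      (le_trans (hicc m).2 (by linarith [Real.pi_pos]))
    positivity
  exact (pow_le_pow_iff_left₀ (norm_nonneg _) h1 two_ne_zero).mp key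

-- Lemma B: lower bound
lemma lower_lemma {n k : ℕ} (hk : 0 < k) {D E : Submodule ℝ (EuclideanSpace ℝ (Fin n))}
    {θ : Fin k → ℝ} (h : CanonicalAnglesSq n k D E θ) :
    ∃ x ∈ D, ‖x‖ = 1 ∧ ∀ y ∈ E, Real.sin (θ ⟨k - 1, by omega⟩) ≤ ‖x - y‖ := by
  obtain ⟨-, -, hmono, hicc, X, Y, hX, hY, hXD, hYE, hXY⟩ := h
  set m : Fin k := ⟨k - 1, by omega⟩
  refine ⟨X m, by rw [← hXD]; exact Submodule.subset_span (Set.mem_range_self m),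
    hX.1 m, ?_⟩
  intro y hy
  rw [← hYE] at hy
  obtain ⟨c, hc⟩ := Submodule.mem_span_range_iff_exists_fun ℝ |>.mp hy
  have hny : ‖y‖ ^ 2 = ∑ j, c j ^ 2 := by
    rw [← hc, ← real_inner_self_eq_norm_sq, hY.inner_sum]
    simp [pow_two]
  have hxy : (inner ℝ (X m) y : ℝ) = c m * Real.cos (θ m) := by
    rw [← hc, inner_sum]
    rw [Finset.sum_eq_single m]
    · rw [real_inner_smul_right, hXY]; simp
    · intro b _ hb
      rw [real_inner_smul_right, hXY]
      simp [Ne.symm hb]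
    · simp
  have hsin0 : 0 ≤ Real.sin (θ m) := Real.sin_nonneg_of_nonneg_of_le_pi (hicc m).1
      (le_trans (hicc m).2 (by linarith [Real.pi_pos]))
  have key : Real.sin (θ m) ^ 2 ≤ ‖X m - y‖ ^ 2 := by
    have hexp : ‖X m - y‖ ^ 2 = 1 - 2 * (c m * Real.cos (θ m)) + ∑ j, c j ^ 2 := by
      rw [norm_sub_sq_real, hxy, ← hny, hX.1 m]
      norm_num
    have hcm : c m ^ 2 ≤ ∑ j, c j ^ 2 :=
      Finset.single_le_sum (f := fun j => c j ^ 2) (fun j _ => sq_nonneg _)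
        (Finset.mem_univ m)
    have hsin : Real.sin (θ m) ^ 2 = 1 - Real.cos (θ m) ^ 2 := Real.sin_sq (θ m)
    nlinarith [sq_nonneg (c m - Real.cos (θ m))]
  exact (pow_le_pow_iff_left₀ hsin0 (norm_nonneg _) two_ne_zero).mp key

-- Decomposition lemma
set_option synthInstance.maxHeartbeats 1000000 in
set_option maxHeartbeats 1000000 in
lemma decomp_lemma {n ℓ : ℕ} (d : Fin ℓ → ℕ)
    (F : Fin ℓ → Submodule ℝ (EuclideanSpace ℝ (Fin n)))
    (hFdim : ∀ i, Module.finrank ℝ (F i) = d i)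
    (hFsum : Module.finrank ℝ ((⨆ i, F i : Submodule ℝ (EuclideanSpace ℝ (Fin n)))) =
      ∑ i, d i) :
    ∃ C : ℝ, 0 ≤ C ∧ ∀ x ∈ (⨆ i, F i : Submodule ℝ (EuclideanSpace ℝ (Fin n))),
      ∃ f : ∀ i, F i, (∑ i, (f i : EuclideanSpace ℝ (Fin n))) = x ∧
        ∀ i, ‖f i‖ ≤ C * ‖x‖ := by
  classical
  set E := EuclideanSpace ℝ (Fin n)
  let Φ : (∀ i, F i) →ₗ[ℝ] E :=
    { toFun := fun f => ∑ i, (f i : E)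
      map_add' := by intro f g; simp [Finset.sum_add_distrib]
      map_smul' := by intro r f; simp [Finset.smul_sum] }
  have hrange : LinearMap.range Φ = ⨆ i, F i := by
    apply le_antisymm
    · rintro x ⟨f, rfl⟩
      show ∑ i, (f i : E) ∈ ⨆ i, F i
      exact Submodule.sum_mem _ fun i _ =>
        Submodule.mem_iSup_of_mem i (f i).2
    · refine iSup_le fun j x hx => ⟨Pi.single j ⟨x, hx⟩, ?_⟩
      show ∑ i, ((Pi.single j (⟨x, hx⟩ : F j) : ∀ i, F i) i : E) = x
      rw [Finset.sum_eq_single j]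
      · simp
      · intro b _ hb; rw [Pi.single_eq_of_ne hb]; simp
      · simp
  have hdom : Module.finrank ℝ (∀ i, F i) = ∑ i, d i := by
    rw [Module.finrank_pi_fintype]
    exact Finset.sum_congr rfl fun i _ => hFdim i
  have hinj : Function.Injective Φ := by
    rw [← LinearMap.ker_eq_bot]
    rw [← Submodule.finrank_eq_zero (S := LinearMap.ker Φ)]
    have := LinearMap.finrank_range_add_finrank_ker Φ
    rw [hdom, hrange, hFsum] at this
    omega
  let e := LinearEquiv.ofInjective Φ hinj
  let g : (LinearMap.range Φ) →L[ℝ] (∀ i, F i) :=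
    LinearMap.toContinuousLinearMap (e.symm : (LinearMap.range Φ) →ₗ[ℝ] (∀ i, F i))
  refine ⟨‖g‖, ContinuousLinearMap.opNorm_nonneg g, fun x hx => ?_⟩
  have hx' : x ∈ LinearMap.range Φ := by rw [hrange]; exact hx
  refine ⟨e.symm ⟨x, hx'⟩, ?_, fun i => ?_⟩
  · have : Φ (e.symm ⟨x, hx'⟩) = x := by
      have h1 : e (e.symm ⟨x, hx'⟩) = ⟨x, hx'⟩ := e.apply_symm_apply _
      have h2 : (e (e.symm ⟨x, hx'⟩) : E) = Φ (e.symm ⟨x, hx'⟩) :=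
        (LinearEquiv.ofInjective_apply Φ (h := hinj) _)
      rw [h1] at h2
      exact h2.symm
    exact this
  · calc ‖(e.symm ⟨x, hx'⟩) i‖ ≤ ‖e.symm ⟨x, hx'⟩‖ := norm_le_pi_norm _ i
      _ = ‖g ⟨x, hx'⟩‖ := rfl
      _ ≤ ‖g‖ * ‖(⟨x, hx'⟩ : LinearMap.range Φ)‖ := g.le_opNorm _
      _ = ‖g‖ * ‖x‖ := rfl

/-- Let `n ≥ 4` and `F₁,…,F_ℓ` be subspaces of `ℝⁿ`, `dim Fᵢ = dᵢ`, spanning a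
subspace `F = F₁ ⊕ ⋯ ⊕ F_ℓ` of dimension `k = d₁ + ⋯ + d_ℓ`.  There is a
constant `c > 0` (depending only on the `Fᵢ` and `n`) such that for all
subspaces `B₁,…,B_ℓ` with `dim Bᵢ = dᵢ` spanning `B = B₁ ⊕ ⋯ ⊕ B_ℓ` of
dimension `k`, one has `ψ_k(F,B) ≤ c ∑ᵢ ψ_{dᵢ}(Fᵢ,Bᵢ)` (sines of largest
canonical angles). -/
theorem psi_of_direct_sum_le (n ℓ : ℕ) (hn : 4 ≤ n) (hℓ : 1 ≤ ℓ)
    (d : Fin ℓ → ℕ) (hd : ∀ i, 1 ≤ d i) (hk : 0 < ∑ i, d i)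
    (F : Fin ℓ → Submodule ℝ (EuclideanSpace ℝ (Fin n)))
    (hFdim : ∀ i, Module.finrank ℝ (F i) = d i)
    (hFsum : Module.finrank ℝ ((⨆ i, F i : Submodule ℝ (EuclideanSpace ℝ (Fin n)))) =
      ∑ i, d i) :
    ∃ c : ℝ, 0 < c ∧
      ∀ B : Fin ℓ → Submodule ℝ (EuclideanSpace ℝ (Fin n)),
        (∀ i, Module.finrank ℝ (B i) = d i) →
        Module.finrank ℝ ((⨆ i, B i : Submodule ℝ (EuclideanSpace ℝ (Fin n)))) =
          ∑ i, d i →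
        ∀ Θ : Fin (∑ i, d i) → ℝ,
          CanonicalAnglesSq n (∑ i, d i) (⨆ i, F i) (⨆ i, B i) Θ →
        ∀ θ : (i : Fin ℓ) → Fin (d i) → ℝ,
          (∀ i, CanonicalAnglesSq n (d i) (F i) (B i) (θ i)) →
        Real.sin (Θ ⟨∑ i, d i - 1, by omega⟩) ≤
          c * ∑ i, Real.sin (θ i ⟨d i - 1, by have := hd i; omega⟩) := by
  obtain ⟨C, hC0, hC⟩ := decomp_lemma d F hFdim hFsum
  refine ⟨Real.sqrt 2 * C + 1, by positivity, ?_⟩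
  intro B hBdim hBsum Θ hΘ θ hθ
  obtain ⟨x, hxF, hx1, hxlow⟩ := lower_lemma hk hΘ
  obtain ⟨f, hfsum, hfle⟩ := hC x hxF
  choose b hbB hble using fun i =>
    approx_lemma (hd i) (hθ i) ((f i : EuclideanSpace ℝ (Fin n))) (f i).2
  have hsin0 : ∀ i, 0 ≤ Real.sin (θ i ⟨d i - 1, by have := hd i; omega⟩) := by
    intro i
    have hicc := (hθ i).2.2.2.1 ⟨d i - 1, by have := hd i; omega⟩
    exact Real.sin_nonneg_of_nonneg_of_le_pi hicc.1
      (le_trans hicc.2 (by linarith [Real.pi_pos]))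
  have hyB : (∑ i, b i) ∈ (⨆ i, B i : Submodule ℝ (EuclideanSpace ℝ (Fin n))) :=
    Submodule.sum_mem _ fun i _ => Submodule.mem_iSup_of_mem i (hbB i)
  calc Real.sin (Θ ⟨∑ i, d i - 1, by omega⟩) ≤ ‖x - ∑ i, b i‖ := hxlow _ hyB
    _ = ‖∑ i, ((f i : EuclideanSpace ℝ (Fin n)) - b i)‖ := by
        rw [Finset.sum_sub_distrib, hfsum]
    _ ≤ ∑ i, ‖(f i : EuclideanSpace ℝ (Fin n)) - b i‖ := norm_sum_le _ _
    _ ≤ ∑ i, Real.sqrt 2 * C * Real.sin (θ i ⟨d i - 1, by have := hd i; omega⟩) := by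
        apply Finset.sum_le_sum
        intro i _
        have h1 := hble i
        have h2 : ‖(f i : EuclideanSpace ℝ (Fin n))‖ ≤ C := by
          have := hfle i
          rwa [hx1, mul_one] at this
        calc ‖(f i : EuclideanSpace ℝ (Fin n)) - b i‖
            ≤ Real.sqrt 2 * Real.sin (θ i ⟨d i - 1, by have := hd i; omega⟩) *
              ‖(f i : EuclideanSpace ℝ (Fin n))‖ := h1
          _ ≤ Real.sqrt 2 * C * Real.sin (θ i ⟨d i - 1, by have := hd i; omega⟩) := by
              have hs := hsin0 i
              nlinarith [mul_nonneg (Real.sqrt_nonneg 2)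
                (mul_nonneg hs (sub_nonneg.mpr h2))]
    _ = Real.sqrt 2 * C * ∑ i, Real.sin (θ i ⟨d i - 1, by have := hd i; omega⟩) := by
        rw [Finset.mul_sum]
    _ ≤ (Real.sqrt 2 * C + 1) * ∑ i, Real.sin (θ i ⟨d i - 1, by have := hd i; omega⟩) := by
        have : 0 ≤ ∑ i, Real.sin (θ i ⟨d i - 1, by have := hd i; omega⟩) :=
          Finset.sum_nonneg fun i _ => hsin0 i
        nlinarith
end

section
/- The only rational solution $(\eta_3,\eta_5,\eta_7,\eta_9)\in\mathbb{Q}^4$ of the system $\eta_3^2-2\eta_5^2+2\eta_5\eta_7-\eta_5\eta_9-\eta_7\eta_9+\eta_9^2=0$, $-\eta_3\eta_7-\eta_5\eta_9+\eta_7\eta_9-\eta_9^2=0$, $-\eta_3\eta_7-\eta_7^2+\eta_7\eta_9=0$, $-2\eta_5\eta_7-\eta_3\eta_9+\eta_7\eta_9=0$, $\eta_3\eta_7-2\eta_5\eta_7+\eta_5\eta_9+\eta_7\eta_9=0$ is the trivial one $(0,0,0,0)$. -/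
/-- `2` is not a square in `ℚ`. -/
lemma aux_no_rat_sqrt_two (q : ℚ) : q ^ 2 ≠ 2 := by
  intro h
  have hd : (q.den : ℚ) ≠ 0 := Nat.cast_ne_zero.mpr q.den_nz
  have hq : (q.num : ℚ) ^ 2 = 2 * (q.den : ℚ) ^ 2 := by
    rw [← Rat.num_div_den q] at h
    field_simp at h
    linarith
  have hZ : q.num ^ 2 = 2 * (q.den : ℤ) ^ 2 := by exact_mod_cast hq
  have h2n : (2 : ℤ) ∣ q.num :=
    Int.prime_two.dvd_of_dvd_pow (n := 2) ⟨(q.den : ℤ) ^ 2, hZ⟩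
  obtain ⟨m, hm⟩ := h2n
  have hden2 : (2 : ℤ) * (q.den : ℤ) ^ 2 = 2 * (2 * m ^ 2) := by
    linear_combination -hZ + (q.num + 2 * m) * hm
  have hden : (q.den : ℤ) ^ 2 = 2 * m ^ 2 := mul_left_cancel₀ two_ne_zero hden2
  have h2d : (2 : ℤ) ∣ (q.den : ℤ) :=
    Int.prime_two.dvd_of_dvd_pow (n := 2) ⟨m ^ 2, hden⟩
  have h2n' : 2 ∣ q.num.natAbs := by
    have : ((2:ℤ)).natAbs ∣ q.num.natAbs := Int.natAbs_dvd_natAbs.mpr ⟨m, hm⟩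
    simpa using this
  have h2d' : 2 ∣ q.den := by exact_mod_cast h2d
  have hg : 2 ∣ Nat.gcd q.num.natAbs q.den := Nat.dvd_gcd h2n' h2d'
  rw [q.reduced] at hg
  omega

/-- The cubic `x³ - 4x² + 2` has no rational root. -/
lemma aux_no_rat_root_cubic (q : ℚ) : q ^ 3 ≠ 4 * q ^ 2 - 2 := by
  intro h
  have hd : (q.den : ℚ) ≠ 0 := Nat.cast_ne_zero.mpr q.den_nz
  have hq : (q.num : ℚ) ^ 3 = 4 * q.num ^ 2 * (q.den : ℚ) - 2 * (q.den : ℚ) ^ 3 := by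
    rw [← Rat.num_div_den q] at h
    field_simp at h
    refine mul_right_cancel₀ (pow_ne_zero 2 hd) ?_
    linear_combination (q.den : ℚ) ^ 2 * h
  have hZ : q.num ^ 3 = 4 * q.num ^ 2 * (q.den : ℤ) - 2 * (q.den : ℤ) ^ 3 := by
    exact_mod_cast hq
  have h2n : (2 : ℤ) ∣ q.num :=
    Int.prime_two.dvd_of_dvd_pow (n := 3)
      ⟨2 * q.num ^ 2 * (q.den : ℤ) - (q.den : ℤ) ^ 3, by linarith⟩
  obtain ⟨m, hm⟩ := h2n
  rw [hm] at hZ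
  have hden2 : (2 : ℤ) * (q.den : ℤ) ^ 3 = 2 * (2 * (4 * m ^ 2 * (q.den : ℤ) - 2 * m ^ 3)) := by
    linear_combination hZ
  have hden : (q.den : ℤ) ^ 3 = 2 * (4 * m ^ 2 * (q.den : ℤ) - 2 * m ^ 3) :=
    mul_left_cancel₀ two_ne_zero hden2
  have h2d : (2 : ℤ) ∣ (q.den : ℤ) :=
    Int.prime_two.dvd_of_dvd_pow (n := 3) ⟨_, hden⟩
  have h2n' : 2 ∣ q.num.natAbs := by
    have : ((2:ℤ)).natAbs ∣ q.num.natAbs := Int.natAbs_dvd_natAbs.mpr ⟨m, hm⟩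
    simpa using this
  have h2d' : 2 ∣ q.den := by exact_mod_cast h2d
  have hg : 2 ∣ Nat.gcd q.num.natAbs q.den := Nat.dvd_gcd h2n' h2d'
  rw [q.reduced] at hg
  omega

/-- The only rational solution `(η₃, η₅, η₇, η₉) ∈ ℚ⁴` of the system coming from
the Plücker relations in `ℝ⁵` is the trivial one `(0,0,0,0)`. -/
theorem rational_system_only_trivial_solution (η₃ η₅ η₇ η₉ : ℚ)
    (h1 : η₃ ^ 2 - 2 * η₅ ^ 2 + 2 * η₅ * η₇ - η₅ * η₉ - η₇ * η₉ + η₉ ^ 2 = 0)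
    (h2 : -(η₃ * η₇) - η₅ * η₉ + η₇ * η₉ - η₉ ^ 2 = 0)
    (h3 : -(η₃ * η₇) - η₇ ^ 2 + η₇ * η₉ = 0)
    (h4 : -(2 * η₅ * η₇) - η₃ * η₉ + η₇ * η₉ = 0)
    (h5 : η₃ * η₇ - 2 * η₅ * η₇ + η₅ * η₉ + η₇ * η₉ = 0) :
    η₃ = 0 ∧ η₅ = 0 ∧ η₇ = 0 ∧ η₉ = 0 := by
  by_cases hc : η₇ = 0
  · subst hc
    have h9sq : η₉ ^ 2 = 0 := by linear_combination -h2 - h5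
    have h9 : η₉ = 0 := by
      have := pow_eq_zero_iff (n := 2) (by norm_num) |>.mp h9sq
      exact this
    subst h9
    have ha : η₃ ^ 2 = 2 * η₅ ^ 2 := by linear_combination h1
    have h5z : η₅ = 0 := by
      by_contra hb
      exact aux_no_rat_sqrt_two (η₃ / η₅) (by field_simp; linarith)
    subst h5z
    have h3z : η₃ = 0 := by
      have : η₃ ^ 2 = 0 := by linarith
      exact pow_eq_zero_iff (n := 2) (by norm_num) |>.mp this
    exact ⟨h3z, rfl, rfl, rfl⟩
  · exfalso
    have ha : η₃ = η₉ - η₇ := by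
      have hz : η₇ * (η₃ + η₇ - η₉) = 0 := by linear_combination -h3
      rcases mul_eq_zero.mp hz with h | h
      · exact absurd h hc
      · linarith
    subst ha
    have e4 : 2 * η₅ * η₇ = 2 * η₇ * η₉ - η₉ ^ 2 := by linear_combination -h4
    have e2 : η₅ * η₉ = η₇ ^ 2 - η₉ ^ 2 := by linear_combination -h2
    have key : 2 * η₇ ^ 3 - 4 * η₇ * η₉ ^ 2 + η₉ ^ 3 = 0 := by
      linear_combination η₉ * e4 - 2 * η₇ * e2
    have hd : η₉ ≠ 0 := by
      intro h9
      subst h9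
      have h7sq : η₇ ^ 2 = 0 := by linear_combination -e2
      exact hc (pow_eq_zero_iff (n := 2) (by norm_num) |>.mp h7sq)
    exact aux_no_rat_root_cubic (η₉ / η₇) (by field_simp; linear_combination key)
end
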